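/- Let $A_k : X \to Y$ ($k \in \mathbb{N}$) and $A : X \to Y$ be bounded linear operators with $A_k^* y \to A^* y$ strongly in $X$ for every $y \in Y$, and let $b_k \to b$ strongly in $Y$. Let $Z = A f_0 + b$ for some $f_0 \in X$ and let $f^\dagger$ be the $f^*$-minimum-norm solution. Let $\delta_k > 0$ and $\rho_k > 0$ satisfy $\delta_k \to 0$, $\rho_k \to 0$, $\delta_k^2/\rho_k \to 0$ and $\omega_k/\rho_k \to 0$, where $\omega_k := \|A_k f^\dagger + b_k - (A f^\dagger + b)\|_Y^2$. Let $z_k \in Y$ with $\|z_k - Z\|_Y \le \delta_k$ and let $f_k$ be the unique minimizer over $X$ of $f \mapsto \|A_k f + b_k - z_k\|_Y^2 + \rho_k \|f - f^*\|_X^2$. Then $\|f_k - f^\dagger\|_X \to 0$ as $k \to \infty$. -/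

import Mathlib

open Filter
open scoped Topology RealInnerProductSpace

/-- If `‖v‖ ≤ ‖v + t • u‖` for all real `t`, then `⟪v, u⟫ = 0`. -/
lemma inner_eq_zero_of_norm_le {X : Type*} [NormedAddCommGroup X] [InnerProductSpace ℝ X]
    (v u : X) (h : ∀ t : ℝ, ‖v‖ ≤ ‖v + t • u‖) : ⟪v, u⟫ = 0 := by
  have key : ∀ t : ℝ, 0 ≤ 2 * t * ⟪v, u⟫ + t ^ 2 * ‖u‖ ^ 2 := by
    intro t
    have h1 : ‖v‖ ^ 2 ≤ ‖v + t • u‖ ^ 2 := by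
      have := h t; nlinarith [norm_nonneg v]
    have h2 : ‖v + t • u‖ ^ 2 = ‖v‖ ^ 2 + 2 * (t * ⟪v, u⟫) + t ^ 2 * ‖u‖ ^ 2 := by
      rw [norm_add_sq_real, real_inner_smul_right, norm_smul]
      simp [mul_pow, Real.norm_eq_abs, sq_abs]
    nlinarith
  set c := ⟪v, u⟫ with hc
  set q := ‖u‖ ^ 2 with hq
  have hq0 : 0 ≤ q := by positivity
  have := key (-c / (q + 1))
  have hq1 : (0:ℝ) < q + 1 := by linarith
  rw [div_pow] at this
  have h3 : 2 * (-c / (q + 1)) * c + (-c) ^ 2 / (q + 1) ^ 2 * q =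
      (-2 * c ^ 2 * (q + 1) + c ^ 2 * q) / (q + 1) ^ 2 := by
    field_simp
  rw [h3] at this
  have h4 : 0 ≤ -2 * c ^ 2 * (q + 1) + c ^ 2 * q := by
    rcases div_nonneg_iff.mp this with ⟨h, _⟩ | ⟨_, h⟩
    · exact h
    · nlinarith
  nlinarith [sq_nonneg c]

lemma mem_closure_range_adjoint {X Y : Type*} [NormedAddCommGroup X] [InnerProductSpace ℝ X]
    [CompleteSpace X] [NormedAddCommGroup Y] [InnerProductSpace ℝ Y] [CompleteSpace Y]
    (A : X →L[ℝ] Y) (v : X) (hv : ∀ u : X, A u = 0 → ⟪u, v⟫ = 0) :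
    v ∈ closure (Set.range fun y => (ContinuousLinearMap.adjoint A) y) := by
  set R : Submodule ℝ X := LinearMap.range ((ContinuousLinearMap.adjoint A : Y →L[ℝ] X) : Y →ₗ[ℝ] X) with hR
  have hmem : v ∈ Rᗮᗮ := by
    rw [Submodule.mem_orthogonal]
    intro u hu
    apply hv
    have h1 : ∀ y : Y, ⟪y, A u⟫ = 0 := by
      intro y
      have := (Submodule.mem_orthogonal R u).mp hu ((ContinuousLinearMap.adjoint A) y)
        ⟨y, rfl⟩
      rwa [ContinuousLinearMap.adjoint_inner_left] at this
    have := h1 (A u)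
    rwa [inner_self_eq_zero] at this
  rw [Submodule.orthogonal_orthogonal_eq_closure] at hmem
  have : (R : Set X) = Set.range fun y => (ContinuousLinearMap.adjoint A) y := by
    ext x; simp [hR, LinearMap.mem_range]
  rw [← this]
  exact hmem

set_option maxHeartbeats 1000000 in
theorem tikhonov_convergence_to_minimum_norm_solution
    {X Y : Type*} [NormedAddCommGroup X] [InnerProductSpace ℝ X] [CompleteSpace X]
    [NormedAddCommGroup Y] [InnerProductSpace ℝ Y] [CompleteSpace Y]
    (A : X →L[ℝ] Y) (b : Y) (fstar : X) (Z : Y) (f0 : X) (hZ : A f0 + b = Z)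
    (fdag : X) (hdagSol : A fdag + b = Z)
    (hdagMin : ∀ f : X, A f + b = Z → ‖fdag - fstar‖ ≤ ‖f - fstar‖)
    (Ak : ℕ → X →L[ℝ] Y)
    (hA : ∀ y : Y, Tendsto (fun k => (ContinuousLinearMap.adjoint (Ak k)) y) atTop
      (𝓝 ((ContinuousLinearMap.adjoint A) y)))
    (bk : ℕ → Y) (hb : Tendsto bk atTop (𝓝 b))
    (δk ρk : ℕ → ℝ) (hδpos : ∀ k, 0 < δk k) (hρpos : ∀ k, 0 < ρk k)
    (hδ0 : Tendsto δk atTop (𝓝 0)) (hρ0 : Tendsto ρk atTop (𝓝 0))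
    (hδρ : Tendsto (fun k => δk k ^ 2 / ρk k) atTop (𝓝 0))
    (hωρ : Tendsto (fun k => ‖Ak k fdag + bk k - (A fdag + b)‖ ^ 2 / ρk k) atTop (𝓝 0))
    (zk : ℕ → Y) (hz : ∀ k, ‖zk k - Z‖ ≤ δk k)
    (fk : ℕ → X)
    (hmin : ∀ k, ∀ f : X,
      ‖Ak k (fk k) + bk k - zk k‖ ^ 2 + ρk k * ‖fk k - fstar‖ ^ 2 ≤
        ‖Ak k f + bk k - zk k‖ ^ 2 + ρk k * ‖f - fstar‖ ^ 2) :
    Tendsto (fun k => ‖fk k - fdag‖) atTop (𝓝 0) := by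
  set v : X := fdag - fstar with hv
  set rk : ℕ → Y := fun k => Ak k (fk k) + bk k - zk k with hrk
  set sk : ℕ → Y := fun k => Ak k fdag + bk k - zk k with hsk
  set wk : ℕ → Y := fun k => Ak k fdag + bk k - (A fdag + b) with hwk
  -- basic estimate on sk
  have hskw : ∀ k, ‖sk k‖ ^ 2 ≤ 2 * ‖wk k‖ ^ 2 + 2 * δk k ^ 2 := by
    intro k
    have h1 : sk k = wk k + (Z - zk k) := by
      simp only [hsk, hwk, hdagSol]; abel
    have h2 : ‖sk k‖ ≤ ‖wk k‖ + ‖Z - zk k‖ := by rw [h1]; exact norm_add_le _ _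
    have h3 : ‖Z - zk k‖ ≤ δk k := by rw [norm_sub_rev]; exact hz k
    have h4 : ‖sk k‖ ≤ ‖wk k‖ + δk k := by linarith
    nlinarith [mul_self_le_mul_self (norm_nonneg (sk k)) h4, sq_nonneg (‖wk k‖ - δk k),
      norm_nonneg (wk k), (hδpos k).le]
  -- main minimality inequality at fdag
  have hmain : ∀ k, ‖rk k‖ ^ 2 + ρk k * ‖fk k - fstar‖ ^ 2 ≤
      ‖sk k‖ ^ 2 + ρk k * ‖v‖ ^ 2 := fun k => hmin k fdag
  -- the epsilon sequence
  set εk : ℕ → ℝ := fun k => 2 * (‖wk k‖ ^ 2 / ρk k) + 2 * (δk k ^ 2 / ρk k) with hεk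
  have hε0 : Tendsto εk atTop (𝓝 0) := by
    have := (hωρ.const_mul 2).add (hδρ.const_mul 2)
    simpa using this
  have hεnn : ∀ k, 0 ≤ εk k := by
    intro k
    have := (hρpos k)
    positivity
  -- bound on ‖fk - fstar‖²
  have hfb : ∀ k, ‖fk k - fstar‖ ^ 2 ≤ ‖v‖ ^ 2 + εk k := by
    intro k
    have h1 := hmain k
    have h2 := hskw k
    have h3 := hρpos k
    have h4 : ρk k * ‖fk k - fstar‖ ^ 2 ≤ 2 * ‖wk k‖ ^ 2 + 2 * δk k ^ 2 + ρk k * ‖v‖ ^ 2 := by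
      nlinarith [sq_nonneg ‖rk k‖]
    have h5 : εk k = (2 * ‖wk k‖ ^ 2 + 2 * δk k ^ 2) / ρk k := by
      simp only [hεk]; field_simp
    rw [h5]
    have h6 : ‖fk k - fstar‖ ^ 2 - ‖v‖ ^ 2 ≤ (2 * ‖wk k‖ ^ 2 + 2 * δk k ^ 2) / ρk k := by
      rw [le_div_iff₀ h3]
      nlinarith
    linarith
  -- ωk := ‖wk‖² → 0
  have hω0 : Tendsto (fun k => ‖wk k‖ ^ 2) atTop (𝓝 0) := by
    have : (fun k => ‖wk k‖ ^ 2) = fun k => (‖wk k‖ ^ 2 / ρk k) * ρk k := by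
      funext k; field_simp [(hρpos k).ne']
    rw [this]
    simpa using hωρ.mul hρ0
  -- residual rk → 0 in Y
  have hr0 : Tendsto rk atTop (𝓝 (0 : Y)) := by
    rw [tendsto_zero_iff_norm_tendsto_zero]
    have hsq : Tendsto (fun k => ‖rk k‖ ^ 2) atTop (𝓝 0) := by
      apply squeeze_zero (fun k => sq_nonneg _)
        (g := fun k => 2 * ‖wk k‖ ^ 2 + 2 * δk k ^ 2 + ρk k * ‖v‖ ^ 2)
      · intro k
        have := hmain k
        have := hskw k
        nlinarith [mul_nonneg (hρpos k).le (sq_nonneg ‖fk k - fstar‖)]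
      · have h1 := (hω0.const_mul 2).add (((hδ0.mul hδ0).const_mul 2))
        have h2 := hρ0.mul_const (‖v‖ ^ 2)
        have := h1.add h2
        simpa [pow_two] using this
    have : (fun k => ‖rk k‖) = fun k => Real.sqrt (‖rk k‖ ^ 2) := by
      funext k; rw [Real.sqrt_sq (norm_nonneg _)]
    rw [this]
    exact (Real.continuous_sqrt.tendsto' 0 0 (by simp)).comp hsq
  -- eventual bound on fk
  obtain ⟨M, hM0, hM⟩ : ∃ M : ℝ, 0 ≤ M ∧ ∀ᶠ k in atTop, ‖fk k‖ ≤ M ∧ ‖fk k - fdag‖ ≤ M := by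
    refine ⟨Real.sqrt (‖v‖ ^ 2 + 1) + ‖fstar‖ + ‖fdag‖ + ‖fstar‖, by positivity, ?_⟩
    have hev : ∀ᶠ k in atTop, εk k ≤ 1 := by
      have := hε0.eventually (eventually_le_nhds (by norm_num : (0:ℝ) < 1))
      exact this
    filter_upwards [hev] with k hk
    have h1 : ‖fk k - fstar‖ ^ 2 ≤ ‖v‖ ^ 2 + 1 := le_trans (hfb k) (by linarith)
    have h2 : ‖fk k - fstar‖ ≤ Real.sqrt (‖v‖ ^ 2 + 1) := by
      rw [← Real.sqrt_sq (norm_nonneg (fk k - fstar))]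
      exact Real.sqrt_le_sqrt h1
    constructor
    · have := norm_le_norm_add_norm_sub' (fk k) fstar
      have h3 : ‖fk k‖ ≤ ‖fstar‖ + ‖fk k - fstar‖ := by
        have := norm_add_le fstar (fk k - fstar)
        rwa [show fstar + (fk k - fstar) = fk k from by abel] at this
      nlinarith [norm_nonneg fdag, norm_nonneg fstar, Real.sqrt_nonneg (‖v‖ ^ 2 + 1)]
    · have h3 : ‖fk k - fdag‖ ≤ ‖fk k - fstar‖ + ‖fstar - fdag‖ := norm_sub_le_norm_sub_add_norm_sub _ _ _
      have h4 : ‖fstar - fdag‖ ≤ ‖fstar‖ + ‖fdag‖ := norm_sub_le _ _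
      nlinarith [norm_nonneg fstar]
  -- weak convergence against A* y
  have hweak : ∀ y : Y, Tendsto (fun k => ⟪(ContinuousLinearMap.adjoint A) y, fk k - fdag⟫)
      atTop (𝓝 0) := by
    intro y
    have hAkfk : Tendsto (fun k => Ak k (fk k)) atTop (𝓝 (Z - b)) := by
      have : (fun k => Ak k (fk k)) = fun k => rk k - bk k + zk k := by
        funext k; simp [hrk]; abel
      rw [this]
      have hzk : Tendsto zk atTop (𝓝 Z) := by
        rw [tendsto_iff_norm_sub_tendsto_zero]
        exact squeeze_zero (fun k => norm_nonneg _) hz hδ0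
      have := (hr0.sub hb).add hzk
      simpa [sub_eq_add_neg, add_comm, add_left_comm, add_assoc] using this
    -- term 2
    have hterm2 : Tendsto (fun k => ⟪((ContinuousLinearMap.adjoint (Ak k)) y), fk k⟫) atTop
        (𝓝 ⟪(ContinuousLinearMap.adjoint A) y, fdag⟫) := by
      have heq : ∀ k, ⟪((ContinuousLinearMap.adjoint (Ak k)) y), fk k⟫ = ⟪y, Ak k (fk k)⟫ :=
        fun k => ContinuousLinearMap.adjoint_inner_left _ _ _
      have hlim : ⟪(ContinuousLinearMap.adjoint A) y, fdag⟫ = ⟪y, Z - b⟫ := by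
        rw [ContinuousLinearMap.adjoint_inner_left]
        congr 1
        rw [← hdagSol]; abel
      simp only [heq, hlim]
      exact Tendsto.inner (𝕜 := ℝ) tendsto_const_nhds hAkfk
    -- term 1 : ⟪(A* - Ak*) y, fk k⟫ → 0
    have hterm1 : Tendsto (fun k =>
        ⟪(ContinuousLinearMap.adjoint A) y - (ContinuousLinearMap.adjoint (Ak k)) y, fk k⟫)
        atTop (𝓝 0) := by
      apply squeeze_zero_norm' (a := fun k =>
        ‖(ContinuousLinearMap.adjoint A) y - (ContinuousLinearMap.adjoint (Ak k)) y‖ * M)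
      · filter_upwards [hM] with k hk
        calc ‖(⟪(ContinuousLinearMap.adjoint A) y - (ContinuousLinearMap.adjoint (Ak k)) y, fk k⟫ : ℝ)‖
            ≤ ‖(ContinuousLinearMap.adjoint A) y - (ContinuousLinearMap.adjoint (Ak k)) y‖ * ‖fk k‖ :=
              norm_inner_le_norm _ _
          _ ≤ _ := by
              apply mul_le_mul_of_nonneg_left hk.1 (norm_nonneg _)
      · have : Tendsto (fun k => ‖(ContinuousLinearMap.adjoint A) y -
            (ContinuousLinearMap.adjoint (Ak k)) y‖) atTop (𝓝 0) := by
          rw [← tendsto_zero_iff_norm_tendsto_zero]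
          have h := (tendsto_const_nhds (x := (ContinuousLinearMap.adjoint A) y)
            (f := atTop (α := ℕ))).sub (hA y)
          simpa using h
        simpa using this.mul_const M
    have hsum : Tendsto (fun k =>
        ⟪(ContinuousLinearMap.adjoint A) y - (ContinuousLinearMap.adjoint (Ak k)) y, fk k⟫ +
        ⟪((ContinuousLinearMap.adjoint (Ak k)) y), fk k⟫ -
        ⟪(ContinuousLinearMap.adjoint A) y, fdag⟫) atTop (𝓝 0) := by
      have := (hterm1.add hterm2).sub_const ⟪(ContinuousLinearMap.adjoint A) y, fdag⟫
      simpa using this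
    have : (fun k =>
        ⟪(ContinuousLinearMap.adjoint A) y - (ContinuousLinearMap.adjoint (Ak k)) y, fk k⟫ +
        ⟪((ContinuousLinearMap.adjoint (Ak k)) y), fk k⟫ -
        ⟪(ContinuousLinearMap.adjoint A) y, fdag⟫) =
        fun k => ⟪(ContinuousLinearMap.adjoint A) y, fk k - fdag⟫ := by
      funext k
      rw [inner_sub_left, inner_sub_right]
      ring
    rwa [this] at hsum
  -- v ∈ closure (range A*)
  have hvclos : v ∈ closure (Set.range fun y => (ContinuousLinearMap.adjoint A) y) := by
    apply mem_closure_range_adjoint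
    intro u hu
    rw [real_inner_comm]
    apply inner_eq_zero_of_norm_le
    intro t
    have hsol : A (fdag + t • u) + b = Z := by
      rw [map_add, map_smul, hu, smul_zero, add_zero, hdagSol]
    have := hdagMin (fdag + t • u) hsol
    calc ‖v‖ = ‖fdag - fstar‖ := by rw [hv]
      _ ≤ ‖fdag + t • u - fstar‖ := this
      _ = ‖v + t • u‖ := by rw [hv]; congr 1; abel
  -- inner product against v tends to 0
  have hinner : Tendsto (fun k => ⟪v, fk k - fdag⟫) atTop (𝓝 0) := by
    rw [NormedAddCommGroup.tendsto_nhds_zero]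
    intro ε hε
    have hε2 : 0 < ε / (2 * (M + 1)) := by positivity
    obtain ⟨w, hw, hwv⟩ := Metric.mem_closure_iff.mp hvclos (ε / (2 * (M + 1))) hε2
    obtain ⟨y, hy⟩ := hw
    have h2' : ∀ᶠ k in atTop, |⟪(ContinuousLinearMap.adjoint A) y, fk k - fdag⟫| < ε / 2 := by
      have := (hweak y).eventually (Metric.ball_mem_nhds (0:ℝ) (show (0:ℝ) < ε/2 by positivity))
      filter_upwards [this] with k hk
      simpa [Real.dist_eq] using hk
    filter_upwards [hM, h2'] with k hk hk2
    have hsplit : (⟪v, fk k - fdag⟫ : ℝ) =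
        ⟪v - w, fk k - fdag⟫ + ⟪w, fk k - fdag⟫ := by
      rw [← inner_add_left, sub_add_cancel]
    have hb1 : |⟪v - w, fk k - fdag⟫| ≤ ‖v - w‖ * M := by
      calc |⟪v - w, fk k - fdag⟫| ≤ ‖v - w‖ * ‖fk k - fdag‖ := by
            simpa using norm_inner_le_norm (𝕜 := ℝ) (v - w) (fk k - fdag)
        _ ≤ ‖v - w‖ * M := mul_le_mul_of_nonneg_left hk.2 (norm_nonneg _)
    have hvw : ‖v - w‖ < ε / (2 * (M + 1)) := by
      rw [← dist_eq_norm]; exact hwv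
    have hb2 : |⟪w, fk k - fdag⟫| < ε / 2 := by rw [← hy]; exact hk2
    have : |⟪v, fk k - fdag⟫| < ε := by
      rw [hsplit]
      calc |⟪v - w, fk k - fdag⟫ + ⟪w, fk k - fdag⟫|
          ≤ |⟪v - w, fk k - fdag⟫| + |⟪w, fk k - fdag⟫| := abs_add_le _ _
        _ < ‖v - w‖ * M + ε / 2 := by linarith [hb1, hb2]
        _ ≤ ε / (2 * (M + 1)) * M + ε / 2 := by
            apply add_le_add ?_ le_rfl
            exact mul_le_mul_of_nonneg_right hvw.le hM0
        _ < ε := by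
            rw [div_mul_eq_mul_div]
            rw [div_add_div _ _ (by positivity) (by norm_num : (2:ℝ) ≠ 0)]
            rw [div_lt_iff₀ (by positivity)]
            nlinarith
    simpa [Real.norm_eq_abs] using this
  -- final squeeze
  have hsq : Tendsto (fun k => ‖fk k - fdag‖ ^ 2) atTop (𝓝 0) := by
    apply squeeze_zero (fun k => sq_nonneg _) (g := fun k => εk k - 2 * ⟪v, fk k - fdag⟫)
    · intro k
      have hid : ‖fk k - fstar‖ ^ 2 =
          ‖fk k - fdag‖ ^ 2 + 2 * ⟪fk k - fdag, v⟫ + ‖v‖ ^ 2 := by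
        rw [← norm_add_sq_real]
        congr 1
        rw [hv]; abel
      have := hfb k
      rw [real_inner_comm v (fk k - fdag)] at hid
      linarith
    · have := hε0.sub (hinner.const_mul 2)
      simpa using this
  have : (fun k => ‖fk k - fdag‖) = fun k => Real.sqrt (‖fk k - fdag‖ ^ 2) := by
    funext k; rw [Real.sqrt_sq (norm_nonneg _)]
  rw [this]
  exact (Real.continuous_sqrt.tendsto' 0 0 (by simp)).comp hsq
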